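/- There is no 3×3 doubly stochastic matrix with rows (up to order) (1/2, 1/4, 1/4), (1/4, 3/4, 0), (1/4, 0, 3/4) that arises as the entrywise squared absolute values of a unitary matrix. -/

import Mathlib

noncomputable def tmat : Matrix (Fin 3) (Fin 3) ℝ :=
  !![1/2, 1/4, 1/4; 1/4, 3/4, 0; 1/4, 0, 3/4]

theorem stmt13 :
    ¬ ∃ (T : Matrix (Fin 3) (Fin 3) ℂ) (_ : T ∈ Matrix.unitaryGroup (Fin 3) ℂ)
        (σ : Equiv.Perm (Fin 3)),
      ∀ i j, ‖T i j‖ ^ 2 = tmat (σ i) j := by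
  rintro ⟨T, hT, σ, h⟩
  have hU : T * T.conjTranspose = 1 := Matrix.mem_unitaryGroup_iff.mp hT
  set a := σ.symm 1 with ha
  set b := σ.symm 2 with hb
  have hab : a ≠ b := by
    simp only [ha, hb, ne_eq, EmbeddingLike.apply_eq_iff_eq]
    decide
  have ha2 : T a 2 = 0 := by
    have := h a 2
    rw [ha, Equiv.apply_symm_apply] at this
    norm_num [tmat, Matrix.cons_val_one, Matrix.cons_val_two, Matrix.head_cons,
      Matrix.tail_cons, Matrix.cons_val_zero] at this
    exact this
  have hb1 : T b 1 = 0 := by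
    have := h b 1
    rw [hb, Equiv.apply_symm_apply] at this
    norm_num [tmat, Matrix.cons_val_one, Matrix.cons_val_two, Matrix.head_cons,
      Matrix.tail_cons, Matrix.cons_val_zero] at this
    exact this
  have horth : (T * T.conjTranspose) a b = 0 := by
    rw [hU, Matrix.one_apply_ne hab]
  rw [Matrix.mul_apply, Fin.sum_univ_three] at horth
  simp only [Matrix.conjTranspose_apply, ha2, hb1, map_zero, mul_zero, zero_mul,
    add_zero, star_zero] at horth
  have := mul_eq_zero.mp horth
  rcases this with h1 | h2
  · have := h a 0
    rw [ha, Equiv.apply_symm_apply, h1] at this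
    norm_num [tmat, Matrix.cons_val_one, Matrix.cons_val_zero, Matrix.head_cons,
      Matrix.tail_cons] at this
  · have hb0 : T b 0 = 0 := by
      have := star_eq_zero.mp h2
      simpa using this
    have := h b 0
    rw [hb, Equiv.apply_symm_apply, hb0] at this
    norm_num [tmat, Matrix.vecHead, Matrix.vecTail, Matrix.cons_val_two, Matrix.cons_val_one, Matrix.cons_val_zero, Matrix.cons_val] at this
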